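/- P = ∏_{n∈ℕ} ℤ binds itself; that is, every homomorphism from P to a free abelian group has image of finite rank. -/

import Mathlib

open Finset

open Finset

/-- Key decomposition: the "infinite sum" y = Σ cₙ xₙ equals the partial sum below N
plus D N times something, provided xₙ vanishes below coordinate n and D N ∣ cₙ for n ≥ N. -/
lemma spk_key (x : ℕ → ℕ → ℤ) (hx : ∀ n m, m < n → x n m = 0)
    (c D : ℕ → ℤ) (hc : ∀ n, D n ∣ c n) (hD : ∀ n, D n ∣ D (n + 1)) (N : ℕ) :
    ∃ w : ℕ → ℤ, (fun m => ∑ n ∈ Finset.range (m + 1), c n * x n m)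
      = (∑ n ∈ Finset.range N, c n • x n) + D N • w := by
  have hDle : ∀ a b : ℕ, a ≤ b → D a ∣ D b := by
    intro a b h
    induction h with
    | refl => exact dvd_rfl
    | step _ ih => exact ih.trans (hD _)
  have hDc : ∀ n, N ≤ n → D N ∣ c n := fun n hn => (hDle N n hn).trans (hc n)
  refine ⟨fun m => ∑ n ∈ Finset.Ico N (m + 1), (c n / D N) * x n m, ?_⟩
  funext m
  have hsum : (∑ n ∈ Finset.range N, c n • x n) m = ∑ n ∈ Finset.range N, c n * x n m := by
    simp [Finset.sum_apply]
  show (∑ n ∈ Finset.range (m + 1), c n * x n m)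
      = (∑ n ∈ Finset.range N, c n • x n) m + D N * (∑ n ∈ Finset.Ico N (m + 1), (c n / D N) * x n m)
  rw [hsum]
  rcases le_or_gt (m + 1) N with h | h
  · rw [Finset.Ico_eq_empty (by omega)]
    simp only [Finset.sum_empty, mul_zero, add_zero]
    refine Finset.sum_subset (Finset.range_subset_range.mpr h) ?_
    intro n _ hn
    have : m < n := by simp at hn ⊢; omega
    rw [hx n m this, mul_zero]
  · have hsplit : ∑ n ∈ Finset.range N, c n * x n m + ∑ n ∈ Finset.Ico N (m + 1), c n * x n m
        = ∑ n ∈ Finset.range (m + 1), c n * x n m := by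
      rw [Finset.range_eq_Ico, Finset.range_eq_Ico]
      exact Finset.sum_Ico_consecutive (fun n => c n * x n m) (Nat.zero_le N) (show N ≤ m + 1 by omega)
    rw [← hsplit, Finset.mul_sum]
    congr 1
    refine Finset.sum_congr rfl ?_
    intro n hn
    rw [Finset.mem_Ico] at hn
    rw [← mul_assoc, Int.mul_ediv_cancel' (hDc n hn.1)]

/-- The hom version of the key decomposition. -/
lemma spk_key_hom {A : Type*} [AddCommGroup A] (h : (ℕ → ℤ) →+ A)
    (x : ℕ → ℕ → ℤ) (hx : ∀ n m, m < n → x n m = 0)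
    (c D : ℕ → ℤ) (hc : ∀ n, D n ∣ c n) (hD : ∀ n, D n ∣ D (n + 1)) (N : ℕ) :
    ∃ w : ℕ → ℤ, h (fun m => ∑ n ∈ Finset.range (m + 1), c n * x n m)
      = (∑ n ∈ Finset.range N, c n • h (x n)) + D N • h w := by
  obtain ⟨w, hw⟩ := spk_key x hx c D hc hD N
  refine ⟨w, ?_⟩
  rw [hw, map_add, map_zsmul, map_sum]
  simp only [map_zsmul]

/-- Specker: every hom `∏ ℤ → ℤ` vanishes on some tail subgroup. -/
lemma spk_tail_vanish (g : (ℕ → ℤ) →+ ℤ) :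
    ∃ N : ℕ, ∀ x : ℕ → ℤ, (∀ m, m < N → x m = 0) → g x = 0 := by
  by_contra hcon
  push_neg at hcon
  choose x hx0 hg using hcon
  set D : ℕ → ℤ := fun n => Nat.rec 1 (fun k Dk => 4 * Dk * (|g (x k)| + 1)) n with hDdef
  have hDsucc : ∀ n, D (n + 1) = 4 * D n * (|g (x n)| + 1) := fun n => rfl
  have hD0 : D 0 = 1 := rfl
  have hDpos : ∀ n, 0 < D n := by
    intro n
    induction n with
    | zero => rw [hD0]; exact one_pos
    | succ k ih =>
      rw [hDsucc]
      have : (0:ℤ) ≤ |g (x k)| := abs_nonneg _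
      nlinarith
  have hD : ∀ n, D n ∣ D (n + 1) := by
    intro n; exact ⟨4 * (|g (x n)| + 1), by rw [hDsucc]; ring⟩
  set c : ℕ → ℤ := fun n => (g (x n)).sign * D n with hcdef
  have hc : ∀ n, D n ∣ c n := fun n => ⟨(g (x n)).sign, mul_comm _ _⟩
  have habs : ∀ n, 1 ≤ |g (x n)| := fun n => Int.one_le_abs (hg n)
  have hterm : ∀ n, c n * g (x n) = D n * |g (x n)| := by
    intro n
    have : (g (x n)).sign * g (x n) = |g (x n)| := by
      rcases lt_trichotomy (g (x n)) 0 with h | h | h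
      · rw [Int.sign_eq_neg_one_of_neg h, abs_of_neg h]; ring
      · exact absurd h (hg n)
      · rw [Int.sign_eq_one_of_pos h, abs_of_pos h]; ring
    calc c n * g (x n) = D n * ((g (x n)).sign * g (x n)) := by rw [hcdef]; ring
    _ = D n * |g (x n)| := by rw [this]
  set s : ℕ → ℤ := fun N => ∑ n ∈ Finset.range N, D n * |g (x n)| with hsdef
  have hs_nonneg : ∀ N, 0 ≤ s N := by
    intro N
    apply Finset.sum_nonneg
    intro n _
    exact mul_nonneg (hDpos n).le (abs_nonneg _)
  have hs_lt : ∀ N, 2 * s N < D N := by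
    intro N
    induction N with
    | zero => rw [hD0]; simp [hsdef]
    | succ k ih =>
      have h1 : s (k + 1) = s k + D k * |g (x k)| := Finset.sum_range_succ _ _
      have h2 : 1 ≤ |g (x k)| := habs k
      have h3 : 0 < D k := hDpos k
      rw [h1, hDsucc]
      nlinarith
  have hs_mono : ∀ N, s N < s (N + 1) := by
    intro N
    have h1 : s (N + 1) = s N + D N * |g (x N)| := Finset.sum_range_succ _ _
    have := hDpos N
    have := habs N
    nlinarith
  have hD_big : ∀ N : ℕ, (N : ℤ) + 1 ≤ D N := by
    intro N
    induction N with
    | zero => rw [hD0]; simp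
    | succ k ih =>
      have h2 : 1 ≤ |g (x k)| := habs k
      have h3 : 0 < D k := hDpos k
      rw [hDsucc]
      push_cast
      nlinarith
  set a : ℤ := g (fun m => ∑ n ∈ Finset.range (m + 1), c n * x n m) with hadef
  have hcong : ∀ N, D N ∣ a - s N := by
    intro N
    obtain ⟨w, hw⟩ := spk_key_hom g x (fun n m h => hx0 n m h) c D hc hD N
    rw [hadef, hw]
    have : ∑ n ∈ Finset.range N, c n • g (x n) = s N := by
      rw [hsdef]
      refine Finset.sum_congr rfl fun n _ => ?_
      rw [smul_eq_mul, hterm n]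
    rw [this, smul_eq_mul]
    simp
  have hkey : ∀ N, 2 * |a| < D N → a = s N := by
    intro N hN
    by_contra hne
    have h1 : D N ∣ a - s N := hcong N
    have h2 : a - s N ≠ 0 := sub_ne_zero.mpr hne
    have h3 : D N ≤ |a - s N| := Int.le_of_dvd (abs_pos.mpr h2) ((dvd_abs _ _).mpr h1)
    have h4 : |a - s N| ≤ |a| + |s N| := abs_sub _ _
    have h5 : |s N| = s N := abs_of_nonneg (hs_nonneg N)
    have h6 := hs_lt N
    linarith
  have key2 : ∀ N : ℕ, 2 * |a| ≤ (N : ℤ) → a = s N := by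
    intro N hN
    have h1 := hD_big N
    exact hkey N (by linarith)
  have hN : 2 * |a| ≤ ((2 * |a|).toNat : ℤ) := Int.self_le_toNat _
  have e1 := key2 (2 * |a|).toNat hN
  have e2 := key2 ((2 * |a|).toNat + 1) (by push_cast; linarith)
  have := hs_mono (2 * |a|).toNat
  omega

lemma spk_fresh {ι : Type*} (f : (ℕ → ℤ) →+ (ι →₀ ℤ))
    (H : ∀ (G : Finset ι) (N : ℕ), ∃ x : ℕ → ℤ,
      (∀ m, m < N → x m = 0) ∧ ∃ i, i ∉ G ∧ f x i ≠ 0) : False := by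
  classical
  choose X hX0 I hI hfI using H
  set G : ℕ → Finset ι := fun n =>
    Nat.rec ∅ (fun k Gk => Gk ∪ (f (X Gk k)).support) n with hGdef
  have hGsucc : ∀ n, G (n + 1) = G n ∪ (f (X (G n) n)).support := fun n => rfl
  set x : ℕ → ℕ → ℤ := fun n => X (G n) n with hxdef
  set i : ℕ → ι := fun n => I (G n) n with hidef
  have hx0 : ∀ n m, m < n → x n m = 0 := fun n => hX0 (G n) n
  have hfresh : ∀ n, i n ∉ G n := fun n => hI (G n) n
  have hv : ∀ n, f (x n) (i n) ≠ 0 := fun n => hfI (G n) n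
  have hsupp : ∀ n, (f (x n)).support ⊆ G (n + 1) := by
    intro n
    rw [hGsucc]
    exact Finset.subset_union_right
  have hGmono : ∀ a b : ℕ, a ≤ b → G a ⊆ G b := by
    intro a b h
    induction h with
    | refl => exact subset_rfl
    | step _ ih =>
      refine ih.trans ?_
      rw [hGsucc]
      exact Finset.subset_union_left
  have hik : ∀ k n : ℕ, k < n → f (x k) (i n) = 0 := by
    intro k n hkn
    rw [← Finsupp.notMem_support_iff]
    intro hmem
    exact hfresh n (hGmono (k + 1) n hkn ((hsupp k) hmem))
  have hiInj : Function.Injective i := by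
    intro k n hkn
    by_contra hne
    rcases Nat.lt_or_ge k n with h | h
    · exact hfresh n (hGmono (k + 1) n h ((hsupp k) (Finsupp.mem_support_iff.mpr (hkn ▸ hv k))))
    · have h' : n < k := by omega
      exact hfresh k (hGmono (n + 1) k h' ((hsupp n) (Finsupp.mem_support_iff.mpr (hkn ▸ hv n))))
  set D : ℕ → ℤ := fun n => Nat.rec 1 (fun k Dk => 2 * Dk * |f (x k) (i k)|) n with hDdef
  have hDsucc : ∀ n, D (n + 1) = 2 * D n * |f (x n) (i n)| := fun n => rfl
  have hD0 : D 0 = 1 := rfl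
  have hDpos : ∀ n, 0 < D n := by
    intro n
    induction n with
    | zero => rw [hD0]; exact one_pos
    | succ k ih =>
      rw [hDsucc]
      have : 1 ≤ |f (x k) (i k)| := Int.one_le_abs (hv k)
      nlinarith
  have hD : ∀ n, D n ∣ D (n + 1) := fun n => ⟨2 * |f (x n) (i n)|, by rw [hDsucc]; ring⟩
  set y : ℕ → ℤ := fun m => ∑ n ∈ Finset.range (m + 1), D n * x n m with hydef
  -- find n with i n outside the support of f y
  have hex : ∃ n, f y (i n) = 0 := by
    set s := (f y).support with hsdef
    by_contra hall
    push_neg at hall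
    have hsub : (Finset.range (s.card + 1)).image i ⊆ s := by
      intro j hj
      rw [Finset.mem_image] at hj
      obtain ⟨n, _, rfl⟩ := hj
      exact Finsupp.mem_support_iff.mpr (hall n)
    have hcard : ((Finset.range (s.card + 1)).image i).card = s.card + 1 := by
      rw [Finset.card_image_of_injective _ hiInj, Finset.card_range]
    have := Finset.card_le_card hsub
    omega
  obtain ⟨n, hn⟩ := hex
  obtain ⟨w, hw⟩ := spk_key_hom f x hx0 D D (fun _ => dvd_rfl) hD (n + 1)
  have heval : f y (i n) = (∑ k ∈ Finset.range (n + 1), D k • f (x k)) (i n)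
      + (D (n + 1) • f w) (i n) := by
    rw [hydef]
    rw [hw]
    simp
  rw [hn] at heval
  have hsum : (∑ k ∈ Finset.range (n + 1), D k • f (x k)) (i n) = D n * f (x n) (i n) := by
    rw [Finset.sum_apply']
    rw [Finset.sum_range_succ]
    have : ∀ k ∈ Finset.range n, (D k • f (x k)) (i n) = 0 := by
      intro k hk
      rw [Finset.mem_range] at hk
      rw [Finsupp.smul_apply, hik k n hk, smul_zero]
    rw [Finset.sum_eq_zero this, zero_add, Finsupp.smul_apply, smul_eq_mul]
  rw [hsum, Finsupp.smul_apply, smul_eq_mul, hDsucc] at heval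
  set v := f (x n) (i n) with hvdef
  set z := f w (i n) with hzdef
  have hveq : v = -(2 * |v| * z) := by
    have hDn : D n ≠ 0 := (hDpos n).ne'
    have : D n * v = D n * (-(2 * |v| * z)) := by linarith [heval]
    exact mul_left_cancel₀ hDn this
  have habsv : 0 < |v| := abs_pos.mpr (hv n)
  have : |v| = 2 * |v| * |z| := by
    calc |v| = |(-(2 * |v| * z))| := by rw [← hveq]
    _ = 2 * |v| * |z| := by rw [abs_neg, abs_mul, abs_mul]; simp [abs_of_nonneg, abs_abs]
  have h1 : 1 = 2 * |z| := by
    have := mul_left_cancel₀ habsv.ne' (by linarith : |v| * 1 = |v| * (2 * |z|))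
    linarith
  omega

open Cardinal

theorem stmt_10.{u} : ∀ (ι : Type u) (f : (ℕ → ℤ) →+ (ι →₀ ℤ)),
    Module.rank ℤ f.range < ℵ₀ := by
  intro ι f
  classical
  have hnb : ¬ (∀ (G : Finset ι) (N : ℕ), ∃ x : ℕ → ℤ,
      (∀ m, m < N → x m = 0) ∧ ∃ i, i ∉ G ∧ f x i ≠ 0) := fun H => spk_fresh f H
  push_neg at hnb
  obtain ⟨G, N₀, hG⟩ := hnb
  -- for each coordinate, a tail-vanishing bound
  have hco := fun i : ι => spk_tail_vanish ((Finsupp.applyAddHom i).comp f)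
  choose Nc hNc using hco
  set M : ℕ := max N₀ (G.sup Nc) with hMdef
  have hvan : ∀ x : ℕ → ℤ, (∀ m, m < M → x m = 0) → f x = 0 := by
    intro x hx
    ext i
    by_cases hi : i ∈ G
    · have hle : Nc i ≤ M := le_trans (Finset.le_sup hi) (le_max_right _ _)
      exact hNc i x (fun m hm => hx m (lt_of_lt_of_le hm hle))
    · exact hG x (fun m hm => hx m (lt_of_lt_of_le hm (le_max_left _ _))) i hi
  -- the extension hom from finitely many coordinates
  set e : (Fin M → ℤ) →+ (ℕ → ℤ) :=
    { toFun := fun c m => if h : m < M then c ⟨m, h⟩ else 0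
      map_zero' := by funext m; by_cases h : m < M <;> simp [h]
      map_add' := by
        intro a b; funext m; by_cases h : m < M <;> simp [h] } with hedef
  set φ : (Fin M → ℤ) →+ (ι →₀ ℤ) := f.comp e with hφdef
  have hrange : f.range = φ.range := by
    apply le_antisymm
    · rintro y ⟨x, rfl⟩
      refine ⟨fun j => x j, ?_⟩
      have hdiff : f (e (fun j => x j) - x) = 0 := by
        apply hvan
        intro m hm
        simp only [hedef, AddMonoidHom.coe_mk, ZeroHom.coe_mk, Pi.sub_apply]
        rw [dif_pos hm]
        simp
      have := map_sub f (e (fun j => x j)) x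
      rw [hdiff] at this
      have := sub_eq_zero.mp this.symm
      simpa [hφdef] using this
    · rintro y ⟨c, rfl⟩
      exact ⟨e c, rfl⟩
  have hfgdom : AddGroup.FG (Fin M → ℤ) :=
    Module.Finite.iff_addGroup_fg.mp inferInstance
  have hfgrange : AddGroup.FG φ.range :=
    AddGroup.fg_of_surjective φ.rangeRestrict_surjective
  have hfg : AddGroup.FG f.range := by rw [hrange]; exact hfgrange
  have : Module.Finite ℤ f.range := Module.Finite.iff_addGroup_fg.mpr hfg
  exact Module.rank_lt_aleph0 ℤ f.range
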